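/- Let H be a complex Hilbert space and let ∘ : E(H) × E(H) → E(H) satisfy the duality condition: A∘ρ is trace-class and Tr((A∘ρ)B) = Tr(ρ(A∘B)) for all ρ ∈ D(H) and A,B ∈ E(H). Then for all A,B,C ∈ E(H) with B ≤ C, one has A∘B ≤ A∘C. -/

import Mathlib

/-!
Common setup: effects, density operators, trace, square roots and the strong
operator topology on a complex Hilbert space `H`, together with the five
conditions (duality, unit, weak associativity, continuity, purity) defining a
sequential product on the set `E(H)` of quantum effects.
-/

set_option maxHeartbeats 1000000
set_option synthInstance.maxHeartbeats 1000000

open scoped InnerProductSpace ComplexOrder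
open Filter

noncomputable section

variable (H : Type*) [NormedAddCommGroup H] [InnerProductSpace ℂ H] [CompleteSpace H]

/-- The index set of a fixed Hilbert basis of `H`. -/
def stdIdx : Set H := (exists_hilbertBasis ℂ H).choose

/-- A fixed Hilbert basis of `H`. -/
def stdBasis : HilbertBasis (stdIdx H) ℂ H := (exists_hilbertBasis ℂ H).choose_spec.choose

variable {H}

/-- The positive square root `A^{1/2}` of a (positive) operator `A`. -/
def sqrtOp (A : H →L[ℂ] H) : H →L[ℂ] H := CFC.sqrt A

/-- The trace of an operator, computed in the fixed Hilbert basis. -/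
def traceOp (T : H →L[ℂ] H) : ℂ := ∑' i, ⟪(stdBasis H i : H), T (stdBasis H i)⟫_ℂ

/-- `T` is trace-class: `|T| = (T*T)^{1/2}` has finite trace. -/
def IsTraceClass (T : H →L[ℂ] H) : Prop :=
  Summable fun i => ⟪(stdBasis H i : H), sqrtOp (star T * T) (stdBasis H i)⟫_ℂ

/-- A quantum effect: an operator `A` with `0 ≤ A ≤ 1` in the Loewner order (in
particular `A` is bounded and self-adjoint).  `E(H)` is the set of effects. -/
def IsEffect (A : H →L[ℂ] H) : Prop := 0 ≤ A ∧ A ≤ 1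

/-- A density operator: a positive trace-class operator of unit trace.
`D(H)` is the set of density operators. -/
def IsDensity (ρ : H →L[ℂ] H) : Prop := 0 ≤ ρ ∧ IsTraceClass ρ ∧ traceOp ρ = 1

variable (H) in
/-- The strong operator topology on bounded operators: the topology of pointwise
convergence (as maps into `H` with its norm topology). -/
def sot : TopologicalSpace (H →L[ℂ] H) :=
  TopologicalSpace.induced (fun T => (T : H → H)) inferInstance

/-- `p` is a rank-one orthogonal projection. -/
def IsRankOneProjection (p : H →L[ℂ] H) : Prop :=
  IsIdempotentElem p ∧ IsSelfAdjoint p ∧ LinearMap.rank (p : H →ₗ[ℂ] H) = 1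

/-- `P_ψ`: the rank-one orthogonal projection onto the span of a unit vector `ψ`,
`x ↦ ⟪ψ, x⟫ • ψ`. -/
def projVec (ψ : H) : H →L[ℂ] H := (innerSL ℂ ψ).smulRight ψ

/-- `op` is a binary operation on `E(H)`: it maps pairs of effects to effects. -/
def EffectClosed (op : (H →L[ℂ] H) → (H →L[ℂ] H) → (H →L[ℂ] H)) : Prop :=
  ∀ A B, IsEffect A → IsEffect B → IsEffect (op A B)

/-- Condition 1 (Duality): for all effects `A, B` and densities `ρ`, the operator
`A ∘ ρ` is trace-class and `Tr((A∘ρ)B) = Tr(ρ(A∘B))`. -/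
def DualityCond (op : (H →L[ℂ] H) → (H →L[ℂ] H) → (H →L[ℂ] H)) : Prop :=
  ∀ A B ρ : H →L[ℂ] H, IsEffect A → IsEffect B → IsDensity ρ →
    IsTraceClass (op A ρ) ∧ traceOp (op A ρ * B) = traceOp (ρ * op A B)

/-- Condition 2 (Unit): `A ∘ I = I ∘ A = A` for every effect `A`. -/
def UnitCond (op : (H →L[ℂ] H) → (H →L[ℂ] H) → (H →L[ℂ] H)) : Prop :=
  ∀ A : H →L[ℂ] H, IsEffect A → op A 1 = A ∧ op 1 A = A

/-- Condition 3 (Weak associativity): `A² ∘ B = A ∘ (A ∘ B)` for all effects `A, B`. -/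
def WeakAssocCond (op : (H →L[ℂ] H) → (H →L[ℂ] H) → (H →L[ℂ] H)) : Prop :=
  ∀ A B : H →L[ℂ] H, IsEffect A → IsEffect B → op (A * A) B = op A (op A B)

/-- Condition 4 (Continuity): for each fixed effect `B`, the map `A ↦ A ∘ B` is
continuous on `E(H)` for the strong operator topology. -/
def ContinuityCond (op : (H →L[ℂ] H) → (H →L[ℂ] H) → (H →L[ℂ] H)) : Prop :=
  ∀ B : H →L[ℂ] H, IsEffect B →
    @ContinuousOn _ _ (sot H) (sot H) (fun A => op A B) {A | IsEffect A}

/-- Condition 5 (Purity): for every effect `A` and every rank-one orthogonal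
projection `p`, the operator `A ∘ p` has rank at most `1`. -/
def PurityCond (op : (H →L[ℂ] H) → (H →L[ℂ] H) → (H →L[ℂ] H)) : Prop :=
  ∀ A p : H →L[ℂ] H, IsEffect A → IsRankOneProjection p →
    LinearMap.rank ((op A p) : H →ₗ[ℂ] H) ≤ 1

section Aux

open scoped ENNReal NNReal

private lemma summable_projVec_mul (ψ : H) (Y : H →L[ℂ] H) :
    Summable fun i : stdIdx H =>
      ⟪(stdBasis H i : H), (projVec ψ * Y) (stdBasis H i)⟫_ℂ := by
  have hterm : ∀ i : stdIdx H,
      ⟪(stdBasis H i : H), (projVec ψ * Y) (stdBasis H i)⟫_ℂ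
        = ⟪(ContinuousLinearMap.adjoint Y) ψ, (stdBasis H i : H)⟫_ℂ
            * ⟪(stdBasis H i : H), ψ⟫_ℂ := by
    intro i
    have happ : (projVec ψ * Y) (stdBasis H i)
        = ⟪ψ, Y (stdBasis H i)⟫_ℂ • ψ := rfl
    rw [happ, inner_smul_right, ContinuousLinearMap.adjoint_inner_left]
  simpa only [hterm] using
    (stdBasis H).summable_inner_mul_inner ((ContinuousLinearMap.adjoint Y) ψ) ψ

private lemma traceOp_projVec_mul (ψ : H) (Y : H →L[ℂ] H) :
    traceOp (projVec ψ * Y) = ⟪ψ, Y ψ⟫_ℂ := by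
  have hterm : ∀ i : stdIdx H,
      ⟪(stdBasis H i : H), (projVec ψ * Y) (stdBasis H i)⟫_ℂ
        = ⟪(ContinuousLinearMap.adjoint Y) ψ, (stdBasis H i : H)⟫_ℂ
            * ⟪(stdBasis H i : H), ψ⟫_ℂ := by
    intro i
    have happ : (projVec ψ * Y) (stdBasis H i)
        = ⟪ψ, Y (stdBasis H i)⟫_ℂ • ψ := rfl
    rw [happ, inner_smul_right, ContinuousLinearMap.adjoint_inner_left]
  rw [traceOp]
  simp only [hterm]
  rw [(stdBasis H).tsum_inner_mul_inner, ContinuousLinearMap.adjoint_inner_left]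

private lemma hasSum_norm_inner_sq (x : H) :
    HasSum (fun i : stdIdx H => ‖⟪(stdBasis H i : H), x⟫_ℂ‖ ^ 2) (‖x‖ ^ 2) := by
  have h := (stdBasis H).hasSum_inner_mul_inner x x
  have hterm : ∀ i : stdIdx H,
      ⟪x, (stdBasis H i : H)⟫_ℂ * ⟪(stdBasis H i : H), x⟫_ℂ
        = ((‖⟪(stdBasis H i : H), x⟫_ℂ‖ : ℂ)) ^ 2 := by
    intro i
    rw [← inner_conj_symm x]
    exact RCLike.conj_mul _
  have hx : ⟪x, x⟫_ℂ = ((‖x‖ : ℂ)) ^ 2 := inner_self_eq_norm_sq_to_K x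
  rw [hx] at h
  simp only [hterm] at h
  have h2 := h.mapL Complex.reCLM
  have h3 : ∀ r : ℝ, Complex.reCLM ((r : ℂ) ^ 2) = r ^ 2 := fun r => by
    simp only [Complex.reCLM_apply]
    norm_cast
  simp only [h3] at h2
  exact h2

private lemma tsum_enn_norm_inner_sq (x : H) :
    ∑' i : stdIdx H, ((‖⟪(stdBasis H i : H), x⟫_ℂ‖₊ : ℝ≥0∞) ^ 2)
      = (‖x‖₊ : ℝ≥0∞) ^ 2 := by
  have h := hasSum_norm_inner_sq x
  have h1 : ENNReal.ofReal (∑' i : stdIdx H, ‖⟪(stdBasis H i : H), x⟫_ℂ‖ ^ 2)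
      = ∑' i : stdIdx H, ENNReal.ofReal (‖⟪(stdBasis H i : H), x⟫_ℂ‖ ^ 2) :=
    ENNReal.ofReal_tsum_of_nonneg (fun i => by positivity) h.summable
  rw [h.tsum_eq] at h1
  have hcoeC : ∀ z : ℂ, ENNReal.ofReal (‖z‖ ^ 2) = (‖z‖₊ : ℝ≥0∞) ^ 2 := fun z => by
    rw [ENNReal.ofReal_pow (norm_nonneg _), ofReal_norm, enorm_eq_nnnorm]
  have hcoeH : ENNReal.ofReal (‖x‖ ^ 2) = (‖x‖₊ : ℝ≥0∞) ^ 2 := by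
    rw [ENNReal.ofReal_pow (norm_nonneg _), ofReal_norm, enorm_eq_nnnorm]
  rw [hcoeH] at h1
  simp only [hcoeC] at h1
  exact h1.symm

private lemma tsum_enn_sq_star (T : H →L[ℂ] H) :
    ∑' i : stdIdx H, ((‖T (stdBasis H i)‖₊ : ℝ≥0∞) ^ 2)
      = ∑' i : stdIdx H, ((‖(star T) (stdBasis H i)‖₊ : ℝ≥0∞) ^ 2) := by
  have key : ∀ (S : H →L[ℂ] H) (i j : stdIdx H),
      (‖⟪(stdBasis H j : H), S (stdBasis H i)⟫_ℂ‖₊ : ℝ≥0∞)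
        = (‖⟪(stdBasis H i : H), (star S) (stdBasis H j)⟫_ℂ‖₊ : ℝ≥0∞) := by
    intro S i j
    congr 1
    apply NNReal.coe_injective
    simp only [coe_nnnorm]
    rw [ContinuousLinearMap.star_eq_adjoint, ContinuousLinearMap.adjoint_inner_right]
    exact norm_inner_symm _ _
  calc ∑' i : stdIdx H, ((‖T (stdBasis H i)‖₊ : ℝ≥0∞) ^ 2)
      = ∑' i : stdIdx H, ∑' j : stdIdx H,
          ((‖⟪(stdBasis H j : H), T (stdBasis H i)⟫_ℂ‖₊ : ℝ≥0∞) ^ 2) := by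
        refine tsum_congr fun i => ?_
        rw [tsum_enn_norm_inner_sq]
    _ = ∑' j : stdIdx H, ∑' i : stdIdx H,
          ((‖⟪(stdBasis H i : H), (star T) (stdBasis H j)⟫_ℂ‖₊ : ℝ≥0∞) ^ 2) := by
        rw [ENNReal.tsum_comm]
        exact tsum_congr fun i => tsum_congr fun j => by rw [key]
    _ = ∑' j : stdIdx H, ((‖(star T) (stdBasis H j)‖₊ : ℝ≥0∞) ^ 2) := by
        refine tsum_congr fun j => ?_
        rw [tsum_enn_norm_inner_sq]

private lemma summable_trace_term {S : H →L[ℂ] H} (hS : 0 ≤ S)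
    (htr : Summable fun i : stdIdx H => ⟪(stdBasis H i : H), S (stdBasis H i)⟫_ℂ)
    (X : H →L[ℂ] H) :
    Summable fun i : stdIdx H => ⟪(stdBasis H i : H), (S * X) (stdBasis H i)⟫_ℂ := by
  set R := CFC.sqrt S with hRdef
  have hR : 0 ≤ R := CFC.sqrt_nonneg S
  have hRR : R * R = S := CFC.sqrt_mul_sqrt_self S hS
  have hRsa : IsSelfAdjoint R := IsSelfAdjoint.of_nonneg hR
  have hRadj : ∀ x y : H, ⟪x, R y⟫_ℂ = ⟪R x, y⟫_ℂ := by
    intro x y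
    conv_lhs => rw [← hRsa.star_eq, ContinuousLinearMap.star_eq_adjoint]
    rw [ContinuousLinearMap.adjoint_inner_right]
  have hnorm : ∀ i : stdIdx H, (‖R (stdBasis H i)‖ ^ 2 : ℝ)
      = (⟪(stdBasis H i : H), S (stdBasis H i)⟫_ℂ).re := by
    intro i
    rw [← hRR]
    have h' : ⟪(stdBasis H i : H), (R * R) (stdBasis H i)⟫_ℂ
        = ⟪R (stdBasis H i), R (stdBasis H i)⟫_ℂ := by
      rw [ContinuousLinearMap.mul_apply, hRadj]
    have hx : ⟪R (stdBasis H i), R (stdBasis H i)⟫_ℂ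
        = ((‖R (stdBasis H i)‖ : ℂ)) ^ 2 := inner_self_eq_norm_sq_to_K _
    rw [h', hx]
    norm_cast
  have h1 : Summable fun i : stdIdx H => ‖R (stdBasis H i)‖ ^ 2 := by
    have h2 := (htr.hasSum.mapL Complex.reCLM).summable
    simp only [Complex.reCLM_apply] at h2
    simpa only [hnorm] using h2
  have h2 : Summable fun i : stdIdx H => ‖(R * X) (stdBasis H i)‖ ^ 2 := by
    have hTstar : star (star X * R) = R * X := by
      rw [star_mul, star_star, hRsa.star_eq]
    have hbound : ∑' i : stdIdx H, ((‖(star X * R) (stdBasis H i)‖₊ : ℝ≥0∞) ^ 2)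
        ≤ (‖star X‖₊ : ℝ≥0∞) ^ 2 * ∑' i : stdIdx H, ((‖R (stdBasis H i)‖₊ : ℝ≥0∞) ^ 2) := by
      rw [← ENNReal.tsum_mul_left]
      refine ENNReal.tsum_le_tsum fun i => ?_
      have hle : ‖(star X * R) (stdBasis H i)‖₊ ≤ ‖star X‖₊ * ‖R (stdBasis H i)‖₊ := by
        simpa using (star X).le_opNNNorm (R (stdBasis H i))
      calc ((‖(star X * R) (stdBasis H i)‖₊ : ℝ≥0∞) ^ 2)
          ≤ ((‖star X‖₊ : ℝ≥0∞) * (‖R (stdBasis H i)‖₊ : ℝ≥0∞)) ^ 2 := by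
            gcongr
            exact_mod_cast hle
        _ = (‖star X‖₊ : ℝ≥0∞) ^ 2 * (‖R (stdBasis H i)‖₊ : ℝ≥0∞) ^ 2 := by ring
    have hRfin : ∑' i : stdIdx H, ((‖R (stdBasis H i)‖₊ : ℝ≥0∞) ^ 2) ≠ ⊤ := by
      have hs : Summable fun i : stdIdx H => (‖R (stdBasis H i)‖₊ ^ 2 : ℝ≥0) := by
        rw [← NNReal.summable_coe]
        simpa using h1
      simpa only [ENNReal.coe_pow] using ENNReal.tsum_coe_ne_top_iff_summable.mpr hs
    have hfin : ∑' i : stdIdx H, ((‖(R * X) (stdBasis H i)‖₊ : ℝ≥0∞) ^ 2) ≠ ⊤ := by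
      rw [← hTstar, ← tsum_enn_sq_star]
      exact ne_top_of_le_ne_top
        (ENNReal.mul_ne_top (ENNReal.pow_ne_top ENNReal.coe_ne_top) hRfin) hbound
    have hs : Summable fun i : stdIdx H => (‖(R * X) (stdBasis H i)‖₊ ^ 2 : ℝ≥0) := by
      rw [← ENNReal.tsum_coe_ne_top_iff_summable]
      simpa only [ENNReal.coe_pow] using hfin
    have h3 := NNReal.summable_coe.mpr hs
    simpa using h3
  have hterm : ∀ i : stdIdx H, ⟪(stdBasis H i : H), (S * X) (stdBasis H i)⟫_ℂ
      = ⟪R (stdBasis H i), (R * X) (stdBasis H i)⟫_ℂ := by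
    intro i
    rw [← hRR]
    have h' : ((R * R) * X) (stdBasis H i) = R ((R * X) (stdBasis H i)) := by
      simp [ContinuousLinearMap.mul_apply]
    rw [h', hRadj]
  rw [funext hterm]
  refine Summable.of_norm_bounded
    (g := fun i => (‖R (stdBasis H i)‖ ^ 2 + ‖(R * X) (stdBasis H i)‖ ^ 2) / 2)
    ((h1.add h2).div_const 2) fun i => ?_
  have hcs := norm_inner_le_norm (𝕜 := ℂ) (R (stdBasis H i)) ((R * X) (stdBasis H i))
  nlinarith [norm_nonneg (R (stdBasis H i)), norm_nonneg ((R * X) (stdBasis H i)),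
    sq_nonneg (‖R (stdBasis H i)‖ - ‖(R * X) (stdBasis H i)‖)]

end Aux

/-- If `∘ : E(H) × E(H) → E(H)` satisfies the duality condition, then for every effect `A`
the map `B ↦ A ∘ B` is monotone: `B ≤ C` implies `A ∘ B ≤ A ∘ C` for effects `B, C`. -/
theorem duality_implies_monotone
    (op : (H →L[ℂ] H) → (H →L[ℂ] H) → (H →L[ℂ] H)) (hmap : EffectClosed op)
    (hdual : DualityCond op) :
    ∀ A B C : H →L[ℂ] H, IsEffect A → IsEffect B → IsEffect C → B ≤ C →
      op A B ≤ op A C := by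
  intro A B C hA hB hC hBC
  set D := C - B with hDdef
  have hD : IsEffect D := by
    constructor
    · rw [ContinuousLinearMap.nonneg_iff_isPositive, hDdef]
      exact (ContinuousLinearMap.le_def B C).mp hBC
    · rw [ContinuousLinearMap.le_def]
      have h1 : (1 - C).IsPositive := (ContinuousLinearMap.le_def C 1).mp hC.2
      have h2 : B.IsPositive := by
        rw [← ContinuousLinearMap.nonneg_iff_isPositive]; exact hB.1
      have heq : (1 - C) + B = 1 - D := by rw [hDdef]; abel
      rw [← heq]
      exact h1.add h2
  have hBD : C = B + D := by rw [hDdef]; abel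
  have hACeff := hmap A C hA hC
  have hABeff := hmap A B hA hB
  have hADeff := hmap A D hA hD
  have hunit : ∀ ψ : H, ‖ψ‖ = 1 →
      0 ≤ (⟪ψ, (op A C - op A B) ψ⟫_ℂ).re := by
    intro ψ hψ
    have hψ2 : ⟪ψ, ψ⟫_ℂ = 1 := by
      rw [inner_self_eq_norm_sq_to_K, hψ]; norm_num
    set ρ := projVec ψ with hρdef
    have hρapp : ∀ x : H, ρ x = ⟪ψ, x⟫_ℂ • ψ := fun x => rfl
    have hρpos : 0 ≤ ρ := by
      rw [ContinuousLinearMap.nonneg_iff_isPositive]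
      constructor
      · intro x y
        simp only [ContinuousLinearMap.coe_coe]
        rw [hρapp, hρapp, inner_smul_left, inner_smul_right, ← inner_conj_symm ψ x,
          Complex.conj_conj]
        ring
      · intro x
        have h' : ⟪ρ x, x⟫_ℂ = ((‖⟪ψ, x⟫_ℂ‖ : ℂ)) ^ 2 := by
          rw [hρapp, inner_smul_left]
          exact RCLike.conj_mul _
        rw [ContinuousLinearMap.reApplyInnerSelf, h', RCLike.re_to_complex]
        have : (((‖⟪ψ, x⟫_ℂ‖ : ℂ)) ^ 2).re = ‖⟪ψ, x⟫_ℂ‖ ^ 2 := by norm_cast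
        rw [this]
        positivity
    have hρsa : IsSelfAdjoint ρ := IsSelfAdjoint.of_nonneg hρpos
    have hρidem : ρ * ρ = ρ := by
      ext x
      rw [ContinuousLinearMap.mul_apply, hρapp x, map_smul, hρapp ψ, hψ2]
      simp
    have hρle1 : ρ ≤ 1 := by
      rw [ContinuousLinearMap.le_def]
      refine ⟨ContinuousLinearMap.isSelfAdjoint_iff_isSymmetric.mp
        ((IsSelfAdjoint.one (R := H →L[ℂ] H)).sub hρsa), fun x => ?_⟩
      have h1 : ⟪(1 - ρ : H →L[ℂ] H) x, x⟫_ℂ = ⟪x, x⟫_ℂ - ⟪ρ x, x⟫_ℂ := by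
        simp [inner_sub_left]
      have h2 : ⟪ρ x, x⟫_ℂ = ((‖⟪ψ, x⟫_ℂ‖ : ℂ)) ^ 2 := by
        rw [hρapp, inner_smul_left]
        exact RCLike.conj_mul _
      have h3 : ⟪x, x⟫_ℂ = ((‖x‖ : ℂ)) ^ 2 := inner_self_eq_norm_sq_to_K x
      rw [ContinuousLinearMap.reApplyInnerSelf, h1, h2, h3, RCLike.re_to_complex]
      have hcs : ‖⟪ψ, x⟫_ℂ‖ ≤ ‖x‖ := by
        simpa [hψ] using norm_inner_le_norm (𝕜 := ℂ) ψ x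
      have hre : ((((‖x‖ : ℂ)) ^ 2 - ((‖⟪ψ, x⟫_ℂ‖ : ℂ)) ^ 2).re)
          = ‖x‖ ^ 2 - ‖⟪ψ, x⟫_ℂ‖ ^ 2 := by norm_cast
      rw [hre]
      nlinarith [norm_nonneg (⟪ψ, x⟫_ℂ), norm_nonneg x]
    have hρeff : IsEffect ρ := ⟨hρpos, hρle1⟩
    have hρsum : Summable fun i : stdIdx H =>
        ⟪(stdBasis H i : H), ρ (stdBasis H i)⟫_ℂ := by
      have h' := summable_projVec_mul ψ (1 : H →L[ℂ] H)
      simpa [hρdef] using h'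
    have hρtc : IsTraceClass ρ := by
      rw [IsTraceClass]
      have hsqrt : sqrtOp (star ρ * ρ) = ρ := by
        rw [sqrtOp, hρsa.star_eq, hρidem]
        exact (CFC.sqrt_eq_iff ρ ρ hρpos hρpos).mpr hρidem
      rw [hsqrt]
      exact hρsum
    have hρtr : traceOp ρ = 1 := by
      have h' : traceOp (ρ * 1) = ⟪ψ, (1 : H →L[ℂ] H) ψ⟫_ℂ := traceOp_projVec_mul ψ 1
      simpa [hψ2, hψ] using h'
    have hρden : IsDensity ρ := ⟨hρpos, hρtc, hρtr⟩
    set S := op A ρ with hSdef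
    have hSeff : IsEffect S := hmap A ρ hA hρeff
    have hSpos : 0 ≤ S := hSeff.1
    have hStc : IsTraceClass S := (hdual A B ρ hA hB hρden).1
    have hSsum : Summable fun i : stdIdx H =>
        ⟪(stdBasis H i : H), S (stdBasis H i)⟫_ℂ := by
      rw [IsTraceClass] at hStc
      have hSsa : IsSelfAdjoint S := IsSelfAdjoint.of_nonneg hSpos
      have hsqrt : sqrtOp (star S * S) = S := by
        rw [sqrtOp, hSsa.star_eq]
        exact CFC.sqrt_mul_self S hSpos
      rwa [hsqrt] at hStc
    have key : ∀ X : H →L[ℂ] H, IsEffect X →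
        ⟪ψ, op A X ψ⟫_ℂ = traceOp (S * X) := by
      intro X hX
      rw [← traceOp_projVec_mul ψ (op A X), ← hρdef, ← (hdual A X ρ hA hX hρden).2, hSdef]
    have sB := summable_trace_term hSpos hSsum B
    have sD := summable_trace_term hSpos hSsum D
    have hadd : traceOp (S * C) = traceOp (S * B) + traceOp (S * D) := by
      have hmul : S * C = S * B + S * D := by rw [hBD, mul_add]
      rw [traceOp, traceOp, traceOp, ← Summable.tsum_add sB sD]
      refine tsum_congr fun i => ?_
      rw [hmul]
      simp [inner_add_right]
    have hmain : ⟪ψ, op A C ψ⟫_ℂ = ⟪ψ, op A B ψ⟫_ℂ + ⟪ψ, op A D ψ⟫_ℂ := by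
      rw [key C hC, key B hB, key D hD, hadd]
    have hDnn : 0 ≤ (⟪ψ, op A D ψ⟫_ℂ).re :=
      ((ContinuousLinearMap.nonneg_iff_isPositive _).mp hADeff.1).re_inner_nonneg_right ψ
    have hsub : ⟪ψ, (op A C - op A B) ψ⟫_ℂ = ⟪ψ, op A D ψ⟫_ℂ := by
      rw [ContinuousLinearMap.sub_apply, inner_sub_right, hmain]
      ring
    rw [hsub]
    exact hDnn
  rw [ContinuousLinearMap.le_def]
  refine ⟨ContinuousLinearMap.isSelfAdjoint_iff_isSymmetric.mp
    ((((ContinuousLinearMap.nonneg_iff_isPositive _).mp hACeff.1).isSelfAdjoint).sub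
    (((ContinuousLinearMap.nonneg_iff_isPositive _).mp hABeff.1).isSelfAdjoint)), fun x => ?_⟩
  rw [ContinuousLinearMap.reApplyInnerSelf]
  by_cases hx : x = 0
  · simp [hx]
  · have hnx : (0 : ℝ) < ‖x‖ := norm_pos_iff.mpr hx
    set T := op A C - op A B with hTdef
    set ψ : H := (‖x‖ : ℂ)⁻¹ • x with hψdef
    have hψ : ‖ψ‖ = 1 := by
      rw [hψdef, norm_smul, norm_inv, Complex.norm_real, Real.norm_eq_abs,
        abs_of_pos hnx, inv_mul_cancel₀ hnx.ne']
    have h := hunit ψ hψ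
    have hsc : ⟪ψ, T ψ⟫_ℂ = (((‖x‖ ^ 2 : ℝ) : ℂ))⁻¹ * ⟪x, T x⟫_ℂ := by
      rw [hψdef, map_smul, inner_smul_left, inner_smul_right, Complex.conj_inv,
        Complex.conj_ofReal]
      push_cast
      ring
    rw [hsc, ← Complex.ofReal_inv, Complex.re_ofReal_mul] at h
    have hx2 : (0 : ℝ) < (‖x‖ ^ 2)⁻¹ := by positivity
    have h2 : 0 ≤ (⟪x, T x⟫_ℂ).re := by nlinarith
    calc (0 : ℝ) ≤ (⟪x, T x⟫_ℂ).re := h2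
      _ = (⟪T x, x⟫_ℂ).re := by
          rw [← inner_conj_symm x (T x), Complex.conj_re]

end
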